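/- The induction step for parallel filtering: if a_{k-l+1} ⊗ ⋯ ⊗ a_k = (p(x_k | y_{k-l+1:k}, x_{k-l}), p(y_{k-l+1:k} | x_{k-l})), then a_{k-l} ⊗ (a_{k-l+1} ⊗ ⋯ ⊗ a_k) = (p(x_k | y_{k-l:k}, x_{k-l-1}), p(y_{k-l:k} | x_{k-l-1})). -/
import Mathlib


open Finset

/-- Forward propagation from a conditioning state in a discrete hidden Markov
model with fixed observations:
`hmmDelta trans like j l z x = p(x_{j+l} = x, y_{j:j+l} ∣ x_{j-1} = z)`, where
`trans k z x = p(x_k = x ∣ x_{k-1} = z)` and `like k x = p(y_k ∣ x_k = x)`. -/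
def hmmDelta {S : Type*} [Fintype S]
    (trans : ℕ → S → S → ℝ) (like : ℕ → S → ℝ) : ℕ → ℕ → S → S → ℝ
  | j, 0, z, x => trans j z x * like j x
  | j, l + 1, z, x =>
      (∑ w, hmmDelta trans like j l z w * trans (j + l + 1) w x) * like (j + l + 1) x

/-- The Bayesian filtering operator `⊗` on pairs `(f, g)`. -/
noncomputable def filtOp {S : Type*} [Fintype S]
    (a b : (S → S → ℝ) × (S → ℝ)) : (S → S → ℝ) × (S → ℝ) :=
  (fun x z => (∑ y, b.2 y * b.1 x y * a.1 y z) / (∑ y, b.2 y * a.1 y z),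
   fun z => a.2 z * ∑ y, b.2 y * a.1 y z)

/-- The composite element
`(p(x_{j+l} ∣ y_{j:j+l}, x_{j-1}), p(y_{j:j+l} ∣ x_{j-1}))`; in particular
`hmmComposite trans like j 0` is the single-step element
`a_j = (p(x_j ∣ y_j, x_{j-1}), p(y_j ∣ x_{j-1}))`. -/
noncomputable def hmmComposite {S : Type*} [Fintype S]
    (trans : ℕ → S → S → ℝ) (like : ℕ → S → ℝ) (j l : ℕ) :
    (S → S → ℝ) × (S → ℝ) :=
  (fun x z => hmmDelta trans like j l z x / ∑ x', hmmDelta trans like j l z x',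
   fun z => ∑ x', hmmDelta trans like j l z x')

lemma hmmDelta_pos {S : Type*} [Fintype S] [Nonempty S]
    (trans : ℕ → S → S → ℝ) (like : ℕ → S → ℝ)
    (htrans : ∀ n z x, 0 < trans n z x) (hlike : ∀ n x, 0 < like n x) :
    ∀ l j (z x : S), 0 < hmmDelta trans like j l z x := by
  intro l
  induction l with
  | zero => intro j z x; exact mul_pos (htrans _ _ _) (hlike _ _)
  | succ l ih =>
    intro j z x
    exact mul_pos
      (Finset.sum_pos (fun w _ => mul_pos (ih j z w) (htrans _ _ _)) univ_nonempty)
      (hlike _ _)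

lemma hmmDelta_split {S : Type*} [Fintype S]
    (trans : ℕ → S → S → ℝ) (like : ℕ → S → ℝ) :
    ∀ l j (z x : S), hmmDelta trans like j (l + 1) z x
      = ∑ y, hmmDelta trans like j 0 z y * hmmDelta trans like (j + 1) l y x := by
  intro l
  induction l with
  | zero =>
    intro j z x
    have e1 : hmmDelta trans like j 1 z x
        = (∑ w, hmmDelta trans like j 0 z w * trans (j + 0 + 1) w x) * like (j + 0 + 1) x := rfl
    rw [e1, Finset.sum_mul]
    refine Finset.sum_congr rfl fun y _ => ?_
    show hmmDelta trans like j 0 z y * trans (j + 0 + 1) y x * like (j + 0 + 1) x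
        = hmmDelta trans like j 0 z y * (trans (j + 1) y x * like (j + 1) x)
    rw [show j + 0 + 1 = j + 1 from by ring]
    ring
  | succ l ih =>
    intro j z x
    have e1 : hmmDelta trans like j (l + 1 + 1) z x
        = (∑ w, hmmDelta trans like j (l + 1) z w * trans (j + (l + 1) + 1) w x)
            * like (j + (l + 1) + 1) x := rfl
    have e2 : ∀ y : S, hmmDelta trans like (j + 1) (l + 1) y x
        = (∑ w, hmmDelta trans like (j + 1) l y w * trans (j + 1 + l + 1) w x)
            * like (j + 1 + l + 1) x := fun _ => rfl
    have harith : j + 1 + l + 1 = j + (l + 1) + 1 := by ring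
    simp only [e1, e2, harith, ih, Finset.sum_mul, Finset.mul_sum]
    rw [Finset.sum_comm]
    exact Finset.sum_congr rfl fun y _ => Finset.sum_congr rfl fun w _ => by ring

/-- **Induction step for parallel filtering** (discrete hidden Markov model):
if `a_{k-l+1} ⊗ ⋯ ⊗ a_k = (p(x_k ∣ y_{k-l+1:k}, x_{k-l}), p(y_{k-l+1:k} ∣ x_{k-l}))`,
then composing with `a_{k-l}` on the left gives
`(p(x_k ∣ y_{k-l:k}, x_{k-l-1}), p(y_{k-l:k} ∣ x_{k-l-1}))`.
Here `j = k - l` and the composite on `l + 1` observations appears on the right. -/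
theorem filtering_induction_step {S : Type*} [Fintype S] [Nonempty S]
    (trans : ℕ → S → S → ℝ) (like : ℕ → S → ℝ)
    (htrans : ∀ n z x, 0 < trans n z x)
    (hlike : ∀ n x, 0 < like n x)
    (htrans1 : ∀ n z, ∑ x, trans n z x = 1)
    (j l : ℕ) (hj : 1 ≤ j) :
    filtOp (hmmComposite trans like j 0) (hmmComposite trans like (j + 1) l)
      = hmmComposite trans like j (l + 1) := by
  have hpos := hmmDelta_pos trans like htrans hlike
  have hS : ∀ l' j' (z : S), (0 : ℝ) < ∑ x', hmmDelta trans like j' l' z x' :=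
    fun l' j' z => Finset.sum_pos (fun x _ => hpos l' j' z x) univ_nonempty
  have key : ∀ z x : S, hmmDelta trans like j (l + 1) z x
      = ∑ y, hmmDelta trans like j 0 z y * hmmDelta trans like (j + 1) l y x :=
    fun z x => hmmDelta_split trans like l j z x
  have hnum : ∀ z : S,
      (∑ y, (∑ x', hmmDelta trans like (j + 1) l y x') * hmmDelta trans like j 0 z y)
        = ∑ x', hmmDelta trans like j (l + 1) z x' := by
    intro z
    simp only [key, Finset.sum_mul]
    rw [Finset.sum_comm]
    exact Finset.sum_congr rfl fun y _ => Finset.sum_congr rfl fun x _ => by ring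
  unfold filtOp hmmComposite
  refine Prod.ext ?_ ?_
  · funext x z
    simp only
    have hS0 : (∑ x', hmmDelta trans like j 0 z x') ≠ 0 := (hS 0 j z).ne'
    have hS1 : ∀ y : S, (∑ x', hmmDelta trans like (j + 1) l y x') ≠ 0 :=
      fun y => (hS l (j + 1) y).ne'
    have h1 : ∀ y : S,
        (∑ x', hmmDelta trans like (j + 1) l y x')
          * (hmmDelta trans like (j + 1) l y x / ∑ x', hmmDelta trans like (j + 1) l y x')
          * (hmmDelta trans like j 0 z y / ∑ x', hmmDelta trans like j 0 z x')
        = hmmDelta trans like (j + 1) l y x * hmmDelta trans like j 0 z y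
            / ∑ x', hmmDelta trans like j 0 z x' := by
      intro y
      rw [mul_div_assoc']
      congr 1
      rw [mul_div_assoc',
        mul_comm (∑ x', hmmDelta trans like (j + 1) l y x') (hmmDelta trans like (j + 1) l y x),
        mul_div_cancel_right₀ _ (hS1 y)]
    have h2 : ∀ y : S,
        (∑ x', hmmDelta trans like (j + 1) l y x')
          * (hmmDelta trans like j 0 z y / ∑ x', hmmDelta trans like j 0 z x')
        = (∑ x', hmmDelta trans like (j + 1) l y x') * hmmDelta trans like j 0 z y
            / ∑ x', hmmDelta trans like j 0 z x' := by
      intro y; rw [mul_div_assoc']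
    simp only [h1, h2]
    rw [← Finset.sum_div, ← Finset.sum_div, div_div_div_cancel_right₀ hS0]
    rw [hnum, key]
    congr 1
    exact Finset.sum_congr rfl fun y _ => by ring
  · funext z
    simp only
    have hS0 : (∑ x', hmmDelta trans like j 0 z x') ≠ 0 := (hS 0 j z).ne'
    have h2 : ∀ y : S,
        (∑ x', hmmDelta trans like (j + 1) l y x')
          * (hmmDelta trans like j 0 z y / ∑ x', hmmDelta trans like j 0 z x')
        = (∑ x', hmmDelta trans like (j + 1) l y x') * hmmDelta trans like j 0 z y
            / ∑ x', hmmDelta trans like j 0 z x' := by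
      intro y; rw [mul_div_assoc']
    simp only [h2]
    rw [← Finset.sum_div, hnum, mul_div_assoc', mul_comm, mul_div_assoc, div_self hS0, mul_one]
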